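/- Let G = (V,E) be a graph and S ⊆ V. If the induced subgraph G[S] has a 1-isolating set D such that there are no edges between S \ N[D] and V \ S, then ι₁(G) ≤ |D| + ι₁(G − S). -/
import Mathlib


open SimpleGraph

/-- The closed neighborhood `N[D]` of a set `D` of vertices. -/
def SimpleGraph.closedNbhd {V : Type*} (G : SimpleGraph V) (D : Set V) : Set V :=
  D ∪ {v | ∃ d ∈ D, G.Adj d v}

/-- `D` is a `K_{1,k+1}`-isolating set of `G`: every vertex outside `N[D]` has at most `k`
neighbors outside `N[D]`, i.e. `Δ(G − N[D]) ≤ k`. -/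
def SimpleGraph.IsIsolatingSet {V : Type*} (G : SimpleGraph V) (k : ℕ) (D : Set V) : Prop :=
  ∀ v ∉ G.closedNbhd D, ({w | w ∉ G.closedNbhd D ∧ G.Adj v w}).ncard ≤ k

/-- The `k`-isolation number `ι_k(G)`: the least size of a `K_{1,k+1}`-isolating set. -/
noncomputable def SimpleGraph.isolNum {V : Type*} (G : SimpleGraph V) (k : ℕ) : ℕ :=
  sInf {n | ∃ D : Set V, G.IsIsolatingSet k D ∧ D.ncard = n}

lemma closedNbhd_mono {V : Type*} (G : SimpleGraph V) {A B : Set V} (h : A ⊆ B) :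
    G.closedNbhd A ⊆ G.closedNbhd B := by
  rintro v (hv | ⟨d, hd, hadj⟩)
  · exact Or.inl (h hv)
  · exact Or.inr ⟨d, h hd, hadj⟩

lemma mem_closedNbhd_image {V : Type*} (G : SimpleGraph V) (S : Set V) (A : Set S)
    {w : S} (h : w ∈ (G.induce S).closedNbhd A) :
    (w : V) ∈ G.closedNbhd (Subtype.val '' A) := by
  rcases h with h | ⟨d, hd, hadj⟩
  · exact Or.inl ⟨w, h, rfl⟩
  · exact Or.inr ⟨d, ⟨d, hd, rfl⟩, hadj⟩

/-- If the induced subgraph on S has a 1-isolating set D with no edges between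
S \ N[D] and V \ S, then ι₁(G) ≤ |D| + ι₁(G − S). -/
theorem isolNum_le_of_isolating_in_induced (V : Type*) [Fintype V] (G : SimpleGraph V)
    (S : Set V) (D : Set S) (hD : (G.induce S).IsIsolatingSet 1 D)
    (hcut : ∀ v : S, v ∉ (G.induce S).closedNbhd D → ∀ w ∉ S, ¬ G.Adj (v : V) w) :
    G.isolNum 1 ≤ D.ncard + (G.induce Sᶜ).isolNum 1 := by
  classical
  have hne : {n | ∃ D' : Set ↥Sᶜ, (G.induce Sᶜ).IsIsolatingSet 1 D' ∧ D'.ncard = n}.Nonempty := by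
    refine ⟨(Set.univ : Set ↥Sᶜ).ncard, Set.univ, ?_, rfl⟩
    intro v hv
    exact absurd (Or.inl (Set.mem_univ v)) hv
  obtain ⟨D', hD', hcard⟩ := Nat.sInf_mem hne
  set T : Set V := Subtype.val '' D ∪ Subtype.val '' D' with hT
  have hTiso : G.IsIsolatingSet 1 T := by
    intro v hv
    by_cases hvS : v ∈ S
    · set vs : S := ⟨v, hvS⟩ with hvsdef
      have hvs : vs ∉ (G.induce S).closedNbhd D := fun h =>
        hv (closedNbhd_mono G Set.subset_union_left (mem_closedNbhd_image G S D h))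
      have hsub : {w | w ∉ G.closedNbhd T ∧ G.Adj v w} ⊆
          Subtype.val '' {w : S | w ∉ (G.induce S).closedNbhd D ∧ (G.induce S).Adj vs w} := by
        rintro w ⟨hwT, hadj⟩
        have hwS : w ∈ S := by
          by_contra hwS
          exact hcut vs hvs w hwS hadj
        refine ⟨⟨w, hwS⟩, ⟨?_, hadj⟩, rfl⟩
        intro h
        exact hwT (closedNbhd_mono G Set.subset_union_left (mem_closedNbhd_image G S D h))
      calc ({w | w ∉ G.closedNbhd T ∧ G.Adj v w}).ncard
          ≤ (Subtype.val '' {w : S | w ∉ (G.induce S).closedNbhd D ∧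
              (G.induce S).Adj vs w}).ncard := Set.ncard_le_ncard hsub (Set.toFinite _)
        _ = ({w : S | w ∉ (G.induce S).closedNbhd D ∧ (G.induce S).Adj vs w}).ncard :=
            Set.ncard_image_of_injective _ Subtype.val_injective
        _ ≤ 1 := hD vs hvs
    · set vc : ↥Sᶜ := ⟨v, hvS⟩ with hvcdef
      have hvc : vc ∉ (G.induce Sᶜ).closedNbhd D' := fun h =>
        hv (closedNbhd_mono G Set.subset_union_right (mem_closedNbhd_image G Sᶜ D' h))
      have hsub : {w | w ∉ G.closedNbhd T ∧ G.Adj v w} ⊆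
          Subtype.val '' {w : ↥Sᶜ | w ∉ (G.induce Sᶜ).closedNbhd D' ∧ (G.induce Sᶜ).Adj vc w} := by
        rintro w ⟨hwT, hadj⟩
        have hwS : w ∉ S := by
          intro hwS
          have hws : (⟨w, hwS⟩ : S) ∉ (G.induce S).closedNbhd D := fun h =>
            hwT (closedNbhd_mono G Set.subset_union_left (mem_closedNbhd_image G S D h))
          exact hcut ⟨w, hwS⟩ hws v hvS hadj.symm
        refine ⟨⟨w, hwS⟩, ⟨?_, hadj⟩, rfl⟩
        intro h
        exact hwT (closedNbhd_mono G Set.subset_union_right (mem_closedNbhd_image G Sᶜ D' h))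
      calc ({w | w ∉ G.closedNbhd T ∧ G.Adj v w}).ncard
          ≤ (Subtype.val '' {w : ↥Sᶜ | w ∉ (G.induce Sᶜ).closedNbhd D' ∧
              (G.induce Sᶜ).Adj vc w}).ncard := Set.ncard_le_ncard hsub (Set.toFinite _)
        _ = ({w : ↥Sᶜ | w ∉ (G.induce Sᶜ).closedNbhd D' ∧ (G.induce Sᶜ).Adj vc w}).ncard :=
            Set.ncard_image_of_injective _ Subtype.val_injective
        _ ≤ 1 := hD' vc hvc
  have h1 : G.isolNum 1 ≤ T.ncard := Nat.sInf_le ⟨T, hTiso, rfl⟩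
  have h2 : T.ncard ≤ D.ncard + D'.ncard := by
    calc T.ncard ≤ (Subtype.val '' D).ncard + (Subtype.val '' D').ncard :=
          Set.ncard_union_le _ _
      _ = D.ncard + D'.ncard := by
          rw [Set.ncard_image_of_injective _ Subtype.val_injective,
            Set.ncard_image_of_injective _ Subtype.val_injective]
  have h3 : (G.induce Sᶜ).isolNum 1 = D'.ncard := hcard.symm
  omega
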